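/- Let 𝔉 be a formation, G a finite group, N ⊴ G, and H a K𝔉-subnormal subgroup of G. Then HN/N is K𝔉-subnormal in G/N, and HN is K𝔉-subnormal in G. -/
import Mathlib


universe u

/-- A class of groups is subgroup-closed if it is closed under taking subgroups. -/
def IsSubgroupClosed (F : ∀ (G : Type u) [Group G], Prop) : Prop :=
  ∀ (G : Type u) [Group G] (H : Subgroup G), F G → F H

/-- A formation: a class of groups closed under isomorphisms, quotients and
subdirect products. -/
structure IsFormation (F : ∀ (G : Type u) [Group G], Prop) : Prop where
  iso : ∀ (G H : Type u) [Group G] [Group H], G ≃* H → F G → F H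
  quot : ∀ (G : Type u) [Group G] (N : Subgroup G) (_ : N.Normal), F G → F (G ⧸ N)
  subdirect : ∀ (G : Type u) [Group G] (N₁ N₂ : Subgroup G) (_ : N₁.Normal) (_ : N₂.Normal),
    F (G ⧸ N₁) → F (G ⧸ N₂) → N₁ ⊓ N₂ = ⊥ → F G

/-- The 𝔉-fResidual of `G`: the smallest normal subgroup with quotient in `F`. -/
def fResidual (F : ∀ (G : Type u) [Group G], Prop) (G : Type u) [Group G] : Subgroup G :=
  sInf {N : Subgroup G | ∃ _ : N.Normal, F (G ⧸ N)}

/-- `KSubnormal F H K` : there is a chain `H = H₀ ≤ … ≤ Hₙ = K` of subgroups of `G`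
such that each `Hᵢ` is normal in `Hᵢ₊₁` or contains the `F`-fResidual of `Hᵢ₊₁`. -/
inductive KSubnormal (F : ∀ (G : Type u) [Group G], Prop) {G : Type u} [Group G] :
    Subgroup G → Subgroup G → Prop
  | refl (H : Subgroup G) : KSubnormal F H H
  | step {H K L : Subgroup G} : KSubnormal F H K → K ≤ L →
      ((K.subgroupOf L).Normal ∨ fResidual F ↥L ≤ K.subgroupOf L) → KSubnormal F H L

/-- `M` is a modular element of the subgroup lattice of `G`. -/
def IsModularSubgroup {G : Type u} [Group G] (M : Subgroup G) : Prop :=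
  (∀ X Y : Subgroup G, X ≤ Y → (X ⊔ M) ⊓ Y = X ⊔ (M ⊓ Y)) ∧
  (∀ X Y : Subgroup G, M ≤ Y → (M ⊔ X) ⊓ Y = M ⊔ (X ⊓ Y))

/-- `Submodular H K` : a chain from `H` to `K` with each term modular in the next. -/
inductive Submodular {G : Type u} [Group G] : Subgroup G → Subgroup G → Prop
  | refl (H : Subgroup G) : Submodular H H
  | step {H K L : Subgroup G} : Submodular H K → K ≤ L →
      IsModularSubgroup (K.subgroupOf L) → Submodular H L

/-- `SubnormalIn H K` : a chain from `H` to `K` with each term normal in the next. -/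
inductive SubnormalIn {G : Type u} [Group G] : Subgroup G → Subgroup G → Prop
  | refl (H : Subgroup G) : SubnormalIn H H
  | step {H K L : Subgroup G} : SubnormalIn H K → K ≤ L →
      (K.subgroupOf L).Normal → SubnormalIn H L

/-- A group is supersolvable if it has a normal series with cyclic factors:
each term is normal in `G` and each successive term is generated by the previous
one together with a single element. -/
def IsSupersolvable (G : Type u) [Group G] : Prop :=
  ∃ (n : ℕ) (s : Fin (n + 1) → Subgroup G), s 0 = ⊥ ∧ s (Fin.last n) = ⊤ ∧
    (∀ i, (s i).Normal) ∧
    ∀ i : Fin n, ∃ g : G, s i.succ = s i.castSucc ⊔ Subgroup.zpowers g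

/-- The class 𝔘₁ of supersolvable groups of square-free exponent. -/
def U1 : ∀ (G : Type u) [Group G], Prop := fun G _ =>
  IsSupersolvable G ∧ Squarefree (Monoid.exponent G)

/-- The solvable radical: the largest normal solvable subgroup. -/
def solvRad (G : Type u) [Group G] : Subgroup G :=
  sSup {N : Subgroup G | N.Normal ∧ IsSolvable ↥N}

/-- The Fitting subgroup: the largest normal nilpotent subgroup. -/
def fitting (G : Type u) [Group G] : Subgroup G :=
  sSup {N : Subgroup G | N.Normal ∧ Group.IsNilpotent ↥N}

section MyHelpers

variable {F : ∀ (G : Type u) [Group G], Prop}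

def resSet (F : ∀ (G : Type u) [Group G], Prop) (G : Type u) [Group G] : Set (Subgroup G) :=
  {N : Subgroup G | ∃ _ : N.Normal, F (G ⧸ N)}

lemma fResidual_eq (G : Type u) [Group G] : fResidual F G = sInf (resSet F G) := rfl

noncomputable def quotComapEquiv {G Q : Type u} [Group G] [Group Q] (f : G →* Q)
    (hf : Function.Surjective ⇑f) (N' : Subgroup Q) [hN' : N'.Normal] :
    (G ⧸ N'.comap f) ≃* (Q ⧸ N') := by
  haveI : (N'.comap f).Normal := hN'.comap f
  have hker : N'.comap f = ((QuotientGroup.mk' N').comp f).ker := by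
    rw [← MonoidHom.comap_ker, QuotientGroup.ker_mk']
  exact (QuotientGroup.quotientMulEquivOfEq hker).trans
    (QuotientGroup.quotientKerEquivOfSurjective _
      ((QuotientGroup.mk'_surjective N').comp hf))

lemma mem_resSet_comap (hF : IsFormation F) {G Q : Type u} [Group G] [Group Q]
    (f : G →* Q) (hf : Function.Surjective ⇑f) {N' : Subgroup Q}
    (h : N' ∈ resSet F Q) : N'.comap f ∈ resSet F G := by
  obtain ⟨hn, hq⟩ := h
  haveI := hn
  exact ⟨hn.comap f, hF.iso _ _ (quotComapEquiv f hf N').symm hq⟩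

lemma fResidual_le_comap (hF : IsFormation F) {G Q : Type u} [Group G] [Group Q]
    (f : G →* Q) (hf : Function.Surjective ⇑f) :
    fResidual F G ≤ (fResidual F Q).comap f := by
  intro x hx
  rw [fResidual_eq, Subgroup.mem_sInf] at hx
  rw [Subgroup.mem_comap, fResidual_eq, Subgroup.mem_sInf]
  intro N' hN'
  exact hx _ (mem_resSet_comap hF f hf hN')

lemma F_quot_of_le (hF : IsFormation F) {G : Type u} [Group G] {A B : Subgroup G}
    (hA : A.Normal) (hB : B.Normal) (hAB : A ≤ B) (h : F (G ⧸ A)) : F (G ⧸ B) := by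
  haveI := hA; haveI := hB
  have hmap : (B.map (QuotientGroup.mk' A)).Normal :=
    hB.map _ (QuotientGroup.mk'_surjective A)
  exact hF.iso _ _ (QuotientGroup.quotientQuotientEquivQuotient A B hAB)
    (hF.quot _ _ hmap h)

lemma resSet_inf (hF : IsFormation F) {G : Type u} [Group G] {N₁ N₂ : Subgroup G}
    (h1 : N₁ ∈ resSet F G) (h2 : N₂ ∈ resSet F G) : N₁ ⊓ N₂ ∈ resSet F G := by
  obtain ⟨hn1, hq1⟩ := h1
  obtain ⟨hn2, hq2⟩ := h2
  haveI := hn1; haveI := hn2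
  haveI hinf : (N₁ ⊓ N₂).Normal := inferInstance
  refine ⟨hinf, ?_⟩
  have hm1 : (N₁.map (QuotientGroup.mk' (N₁ ⊓ N₂))).Normal :=
    hn1.map _ (QuotientGroup.mk'_surjective _)
  have hm2 : (N₂.map (QuotientGroup.mk' (N₁ ⊓ N₂))).Normal :=
    hn2.map _ (QuotientGroup.mk'_surjective _)
  refine hF.subdirect _ _ _ hm1 hm2 ?_ ?_ ?_
  · exact hF.iso _ _
      (QuotientGroup.quotientQuotientEquivQuotient (N₁ ⊓ N₂) N₁ inf_le_left).symm hq1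
  · exact hF.iso _ _
      (QuotientGroup.quotientQuotientEquivQuotient (N₁ ⊓ N₂) N₂ inf_le_right).symm hq2
  · rw [eq_bot_iff]
    rintro x ⟨hx1, hx2⟩
    obtain ⟨a, ha, hax⟩ := hx1
    obtain ⟨b, hb, hbx⟩ := hx2
    have hab : ∃ z ∈ N₁ ⊓ N₂, a * z = b := by
      rw [← QuotientGroup.mk'_eq_mk', hax, hbx]
    obtain ⟨z, hz, hzz⟩ := hab
    have hbN1 : b ∈ N₁ := by rw [← hzz]; exact mul_mem ha hz.1
    rw [Subgroup.mem_bot, ← hbx]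
    rw [show ((QuotientGroup.mk' (N₁ ⊓ N₂)) b = 1 ↔ b ∈ N₁ ⊓ N₂) from
      QuotientGroup.eq_one_iff b]
    exact ⟨hbN1, hb⟩

lemma resSet_sInf_mem (hF : IsFormation F) {G : Type u} [Group G] [Finite G]
    (hne : (resSet F G).Nonempty) : fResidual F G ∈ resSet F G := by
  haveI : Fintype (Subgroup G) := Fintype.ofFinite _
  have hfin : (resSet F G).Finite := Set.toFinite _
  have ht : hfin.toFinset.Nonempty := by rwa [Set.Finite.toFinset_nonempty]
  have key : hfin.toFinset.inf' ht id ∈ resSet F G :=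
    Finset.inf'_mem _ (fun x hx y hy => resSet_inf hF hx hy) _ ht id
      (fun i hi => hfin.mem_toFinset.1 hi)
  have heq : fResidual F G = hfin.toFinset.inf' ht id := by
    rw [Finset.inf'_eq_inf, Finset.inf_id_eq_sInf, hfin.coe_toFinset, fResidual_eq]
  rwa [heq]

lemma fResidual_normal {G : Type u} [Group G] : (fResidual F G).Normal := by
  constructor
  intro x hx g
  rw [fResidual_eq, Subgroup.mem_sInf] at hx ⊢
  intro N hN
  obtain ⟨hn, -⟩ := id hN
  exact hn.conj_mem x (hx N hN) g

lemma fResidual_map_le (hF : IsFormation F) {G Q : Type u} [Group G] [Group Q] [Finite G]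
    (f : G →* Q) (hf : Function.Surjective ⇑f) :
    fResidual F Q ≤ (fResidual F G).map f := by
  by_cases hne : (resSet F G).Nonempty
  · obtain ⟨hn, hq⟩ := resSet_sInf_mem hF hne
    have hmapn : ((fResidual F G).map f).Normal := hn.map f hf
    haveI := hmapn
    have hmem : (fResidual F G).map f ∈ resSet F Q := by
      refine ⟨hmapn, ?_⟩
      refine hF.iso _ _ (quotComapEquiv f hf _) ?_
      haveI := hn
      haveI : (Subgroup.comap f (Subgroup.map f (fResidual F G))).Normal :=
        hmapn.comap f
      haveI : (fResidual F G ⊔ f.ker).Normal := by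
        rw [← Subgroup.comap_map_eq]; infer_instance
      refine hF.iso _ _ (QuotientGroup.quotientMulEquivOfEq
        (Subgroup.comap_map_eq f (fResidual F G)).symm) ?_
      exact F_quot_of_le hF hn inferInstance le_sup_left hq
    exact sInf_le hmem
  · have hQ : ¬ (resSet F Q).Nonempty := by
      rintro ⟨N', hN'⟩
      exact hne ⟨N'.comap f, mem_resSet_comap hF f hf hN'⟩
    rw [Set.not_nonempty_iff_eq_empty] at hne hQ
    rw [fResidual_eq, hQ, sInf_empty]
    rw [fResidual_eq, hne, sInf_empty, Subgroup.map_top_of_surjective f hf]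

lemma mem_sup_decomp {G : Type u} [Group G] {K N : Subgroup G} (hN : N.Normal)
    {m : G} (hm : m ∈ K ⊔ N) : ∃ k ∈ K, ∃ n ∈ N, k * n = m := by
  haveI := hN
  have : m ∈ ((K ⊔ N : Subgroup G) : Set G) := hm
  rw [Subgroup.mul_normal K N, Set.mem_mul] at this
  exact this

lemma KSubnormal.map_surj (hF : IsFormation F) {G Q : Type u} [Group G] [Group Q] [Finite G]
    (f : G →* Q) (hf : Function.Surjective ⇑f) {H K : Subgroup G}
    (h : KSubnormal F H K) : KSubnormal F (H.map f) (K.map f) := by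
  induction h with
  | refl => exact .refl _
  | @step K L hs hle hc ih =>
    refine .step ih (Subgroup.map_mono hle) ?_
    cases hc with
    | inl hc =>
      left
      constructor
      intro n hn g
      rw [Subgroup.mem_subgroupOf] at hn ⊢
      obtain ⟨k, hk, hkn⟩ := hn
      obtain ⟨l, hl, hlg⟩ := g.2
      refine ⟨l * k * l⁻¹, ?_, ?_⟩
      · have := hc.conj_mem ⟨k, hle hk⟩ (Subgroup.mem_subgroupOf.2 hk) ⟨l, hl⟩
        exact Subgroup.mem_subgroupOf.1 this
      · push_cast
        rw [map_mul, map_mul, map_inv, hkn, hlg]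
    | inr hc =>
      right
      calc fResidual F ↥(L.map f)
          ≤ (fResidual F ↥L).map (f.subgroupMap L) :=
            fResidual_map_le hF _ (f.subgroupMap_surjective L)
        _ ≤ (K.subgroupOf L).map (f.subgroupMap L) := Subgroup.map_mono hc
        _ ≤ (K.map f).subgroupOf (L.map f) := by
            rintro x ⟨a, ha, hax⟩
            rw [Subgroup.mem_subgroupOf]
            refine ⟨↑a, Subgroup.mem_subgroupOf.1 ha, ?_⟩
            rw [← hax]; rfl

lemma KSubnormal.sup_right (hF : IsFormation F) {G : Type u} [Group G] [Finite G]
    {N : Subgroup G} (hN : N.Normal) {H K : Subgroup G}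
    (h : KSubnormal F H K) : KSubnormal F (H ⊔ N) (K ⊔ N) := by
  haveI := hN
  induction h with
  | refl => exact .refl _
  | @step K L hs hle hc ih =>
    refine .step ih (sup_le_sup_right hle N) ?_
    cases hc with
    | inl hc =>
      left
      have conjK : ∀ k ∈ K, ∀ l ∈ L, l * k * l⁻¹ ∈ K := by
        intro k hk l hl
        have := hc.conj_mem ⟨k, hle hk⟩ (Subgroup.mem_subgroupOf.2 hk) ⟨l, hl⟩
        exact Subgroup.mem_subgroupOf.1 this
      constructor
      intro x hx g
      rw [Subgroup.mem_subgroupOf] at hx ⊢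
      obtain ⟨k, hk, n₁, hn₁, hkn⟩ := mem_sup_decomp hN hx
      obtain ⟨l, hl, n₂, hn₂, hln⟩ := mem_sup_decomp hN g.2
      push_cast
      set gg : G := ↑g
      set m : G := ↑x
      have h2 : gg * n₁ * gg⁻¹ ∈ N := hN.conj_mem _ hn₁ _
      have hx2 : k⁻¹ * n₂ * k * n₂⁻¹ ∈ N := by
        have := hN.conj_mem n₂ hn₂ k⁻¹
        rw [inv_inv] at this
        exact mul_mem this (inv_mem hn₂)
      have h3 : l * (k⁻¹ * n₂ * k * n₂⁻¹) * l⁻¹ ∈ N := hN.conj_mem _ hx2 _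
      have h1 : gg * k * gg⁻¹ ∈ K ⊔ N := by
        have heq : gg * k * gg⁻¹ = (l * k * l⁻¹) * (l * (k⁻¹ * n₂ * k * n₂⁻¹) * l⁻¹) := by
          rw [← hln]; group
        rw [heq]
        exact mul_mem ((le_sup_left : K ≤ K ⊔ N) (conjK k hk l hl))
          ((le_sup_right : N ≤ K ⊔ N) h3)
      have hfin : gg * m * gg⁻¹ = (gg * k * gg⁻¹) * (gg * n₁ * gg⁻¹) := by
        rw [← hkn]; group
      rw [hfin]
      exact mul_mem h1 ((le_sup_right : N ≤ K ⊔ N) h2)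
    | inr hc =>
      right
      have hNM : (N.subgroupOf (L ⊔ N)).Normal := by
        constructor
        intro x hx g
        rw [Subgroup.mem_subgroupOf] at hx ⊢
        push_cast
        exact hN.conj_mem _ hx _
      haveI := hNM
      set φ : ↥L →* ↥(L ⊔ N) ⧸ (N.subgroupOf (L ⊔ N)) :=
        (QuotientGroup.mk' _).comp (Subgroup.inclusion (le_sup_left : L ≤ L ⊔ N)) with hφdef
      have hφ : Function.Surjective ⇑φ := by
        intro x
        obtain ⟨⟨m, hm⟩, rfl⟩ := QuotientGroup.mk'_surjective _ x
        obtain ⟨l, hl, n, hn, rfl⟩ := mem_sup_decomp hN hm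
        refine ⟨⟨l, hl⟩, ?_⟩
        show QuotientGroup.mk' _ (Subgroup.inclusion _ ⟨l, hl⟩) = QuotientGroup.mk' _ ⟨l * n, hm⟩
        rw [QuotientGroup.mk'_eq_mk']
        refine ⟨⟨n, ?_⟩, Subgroup.mem_subgroupOf.2 hn, ?_⟩
        · exact (le_sup_right : N ≤ L ⊔ N) hn
        · rfl
      calc fResidual F ↥(L ⊔ N)
          ≤ (fResidual F (↥(L ⊔ N) ⧸ N.subgroupOf (L ⊔ N))).comap (QuotientGroup.mk' _) :=
            fResidual_le_comap hF _ (QuotientGroup.mk'_surjective _)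
        _ ≤ ((fResidual F ↥L).map φ).comap (QuotientGroup.mk' _) :=
            Subgroup.comap_mono (fResidual_map_le hF φ hφ)
        _ ≤ ((K.subgroupOf L).map φ).comap (QuotientGroup.mk' _) :=
            Subgroup.comap_mono (Subgroup.map_mono hc)
        _ ≤ (K ⊔ N).subgroupOf (L ⊔ N) := by
            rintro x hx
            rw [Subgroup.mem_comap] at hx
            obtain ⟨a, ha, hax⟩ := hx
            have hax' : QuotientGroup.mk' (N.subgroupOf (L ⊔ N))
                (Subgroup.inclusion (le_sup_left : L ≤ L ⊔ N) a) = QuotientGroup.mk' _ x := hax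
            rw [QuotientGroup.mk'_eq_mk'] at hax'
            obtain ⟨z, hz, hzx⟩ := hax'
            rw [Subgroup.mem_subgroupOf]
            have : (x : G) = ↑a * ↑z := by rw [← hzx]; rfl
            rw [this]
            exact mul_mem ((le_sup_left : K ≤ K ⊔ N) (Subgroup.mem_subgroupOf.1 ha))
              ((le_sup_right : N ≤ K ⊔ N) (Subgroup.mem_subgroupOf.1 hz))

end MyHelpers

theorem stmt2 (F : ∀ (G : Type u) [Group G], Prop) (hF : IsFormation F)
    {G : Type u} [Group G] [Finite G] {N H : Subgroup G} (hN : N.Normal)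
    (h : KSubnormal F H ⊤) :
    KSubnormal F ((H ⊔ N).map (QuotientGroup.mk' N)) (⊤ : Subgroup (G ⧸ N)) ∧
    KSubnormal F (H ⊔ N) ⊤ := by
  haveI := hN
  have h2 : KSubnormal F (H ⊔ N) ⊤ := by
    have := KSubnormal.sup_right hF hN h
    rwa [top_sup_eq] at this
  refine ⟨?_, h2⟩
  have := KSubnormal.map_surj hF (QuotientGroup.mk' N) (QuotientGroup.mk'_surjective N) h2
  rwa [Subgroup.map_top_of_surjective _ (QuotientGroup.mk'_surjective N)] at this
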